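/- For every even integer n ≥ 2 and every integer λ ≥ 1, the harmonious total chromatic number of the complete multigraph λK_n satisfies h_t(λK_n) ≥ (λ−1)(n−1) + 3n/2. -/

import Mathlib

set_option maxHeartbeats 1000000


/-- A harmonious total colouring of the complete multigraph `λK_n` with `k` colours.
Vertices are `Fin n`; the `lam` parallel edges joining a pair `e` of distinct vertices
are `(e, i)` for `i : Fin lam`.  The colouring is proper on vertices (all vertices are
pairwise adjacent), on edges sharing an endpoint (in particular parallel edges), and on
vertex-edge incidences; moreover the unordered pairs `{cv v, ce e i}` over incident
vertex-edge pairs are pairwise distinct. -/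
def IsHarmoniousTotalColoringM (n lam k : ℕ)
    (cv : Fin n → Fin k) (ce : Sym2 (Fin n) → Fin lam → Fin k) : Prop :=
  (∀ u v : Fin n, u ≠ v → cv u ≠ cv v) ∧
  (∀ (e f : Sym2 (Fin n)) (i j : Fin lam), ¬ e.IsDiag → ¬ f.IsDiag → (e, i) ≠ (f, j) →
    (∃ v, v ∈ e ∧ v ∈ f) → ce e i ≠ ce f j) ∧
  (∀ (v : Fin n) (e : Sym2 (Fin n)) (i : Fin lam), ¬ e.IsDiag → v ∈ e → cv v ≠ ce e i) ∧
  (∀ (v : Fin n) (e : Sym2 (Fin n)) (i : Fin lam) (w : Fin n) (f : Sym2 (Fin n)) (j : Fin lam),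
    ¬ e.IsDiag → ¬ f.IsDiag → v ∈ e → w ∈ f →
    s(cv v, ce e i) = s(cv w, ce f j) → v = w ∧ e = f ∧ i = j)

/-- The harmonious total chromatic number of the complete multigraph `λK_n`. -/
noncomputable def harmoniousTotalChromaticNumberM (n lam : ℕ) : ℕ :=
  sInf {k | ∃ cv ce, IsHarmoniousTotalColoringM n lam k cv ce}

open Finset in
/-- The number of incidences at a fixed vertex `v` is `lam * (n-1)`. -/
lemma aux_fiber_card (n lam : ℕ) (v : Fin n) :
    ((Finset.univ.filter (fun p : Fin n × Sym2 (Fin n) × Fin lam =>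
      ¬ p.2.1.IsDiag ∧ p.1 ∈ p.2.1)).filter (fun p => p.1 = v)).card = lam * (n - 1) := by
  classical
  have h := Finset.card_bij
    (fun (q : Fin n × Fin lam) (_ : q ∈ (Finset.univ.erase v) ×ˢ (Finset.univ : Finset (Fin lam)))
      => ((v, s(v, q.1), q.2) : Fin n × Sym2 (Fin n) × Fin lam))
    (s := (Finset.univ.erase v) ×ˢ (Finset.univ : Finset (Fin lam)))
    (t := (Finset.univ.filter (fun p : Fin n × Sym2 (Fin n) × Fin lam =>
      ¬ p.2.1.IsDiag ∧ p.1 ∈ p.2.1)).filter (fun p => p.1 = v))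
    ?_ ?_ ?_
  · rw [← h, Finset.card_product, Finset.card_erase_of_mem (Finset.mem_univ v)]
    simp [Nat.mul_comm]
  · rintro ⟨u, i⟩ hq
    simp only [Finset.mem_product, Finset.mem_erase, Finset.mem_univ, and_true] at hq
    refine Finset.mem_filter.mpr ⟨Finset.mem_filter.mpr ⟨Finset.mem_univ _, ?_, ?_⟩, rfl⟩
    · simp only [Sym2.mk_isDiag_iff]
      exact fun hvu => hq hvu.symm
    · exact Sym2.mem_mk_left v u
  · rintro ⟨u, i⟩ hq ⟨u', i'⟩ hq' heq
    simp only [Finset.mem_product, Finset.mem_erase, Finset.mem_univ, and_true] at hq hq'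
    simp only [Prod.mk.injEq] at heq
    obtain ⟨-, h1, h2⟩ := heq
    rw [Sym2.eq_iff] at h1
    rcases h1 with ⟨-, rfl⟩ | ⟨h, -⟩
    · exact Prod.ext rfl h2
    · exact absurd h.symm hq'
  · rintro ⟨w, e, i⟩ hb
    simp only [Finset.mem_filter, Finset.mem_univ, true_and] at hb
    obtain ⟨⟨hd, hm⟩, rfl⟩ := hb
    obtain ⟨u, rfl⟩ := Sym2.mem_iff_exists.mp hm
    refine ⟨(u, i), ?_, rfl⟩
    simp only [Finset.mem_product, Finset.mem_erase, Finset.mem_univ, and_true]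
    intro huv; exact hd (by simp [huv])

/-- For every even `n ≥ 2` and every `λ ≥ 1`,
`h_t(λK_n) ≥ (λ - 1)(n - 1) + 3n/2`. -/
theorem ht_multigraph_lower_even (n lam : ℕ) (hlam : 1 ≤ lam) (hn : 2 ≤ n) (hne : Even n) :
    (lam - 1) * (n - 1) + 3 * n / 2 ≤ harmoniousTotalChromaticNumberM n lam := by
  classical
  unfold harmoniousTotalChromaticNumberM
  apply le_csInf
  · -- nonemptiness: a colouring with all distinct colours
    refine ⟨Fintype.card (Fin n ⊕ (Sym2 (Fin n) × Fin lam)), ?_⟩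
    set φ := (Fintype.equivFin (Fin n ⊕ (Sym2 (Fin n) × Fin lam))) with hφ
    refine ⟨fun v => φ (Sum.inl v), fun e i => φ (Sum.inr (e, i)), ?_, ?_, ?_, ?_⟩
    · intro u v huv h
      exact huv (by simpa using φ.injective h)
    · intro e f i j _ _ hne _ h
      exact hne (by simpa [Prod.ext_iff] using φ.injective h)
    · intro v e i _ _ h
      simpa using φ.injective h
    · intro v e i w f j _ _ _ _ h
      rw [Sym2.eq_iff] at h
      rcases h with ⟨h1, h2⟩ | ⟨h1, h2⟩
      · have h1' := φ.injective h1
        have h2' := φ.injective h2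
        simp only [Sum.inl.injEq, Sum.inr.injEq, Prod.mk.injEq] at h1' h2'
        exact ⟨h1', h2'.1, h2'.2⟩
      · exact absurd (φ.injective h1) (by simp)
  · rintro k ⟨cv, ce, H1, H2, H3, H4⟩
    obtain ⟨m, hm⟩ := hne
    set I : Finset (Fin n × Sym2 (Fin n) × Fin lam) :=
      Finset.univ.filter (fun p => ¬ p.2.1.IsDiag ∧ p.1 ∈ p.2.1) with hIdef
    set B : Fin k → Finset (Fin n × Sym2 (Fin n) × Fin lam) :=
      fun c => I.filter (fun p => ce p.2.1 p.2.2 = c) with hBdef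
    -- the key local inequality at each vertex colour
    have key : ∀ v : Fin n, lam * (n - 1) + 1 + (B (cv v)).card ≤ k := by
      intro v
      set c := cv v with hc
      set A : Finset (Fin n × Sym2 (Fin n) × Fin lam) := I.filter (fun p => p.1 = v) with hAdef
      have hAcard : A.card = lam * (n - 1) := aux_fiber_card n lam v
      have hmemI : ∀ p ∈ A ∪ B c, ¬ p.2.1.IsDiag ∧ p.1 ∈ p.2.1 := by
        intro p hp
        rcases Finset.mem_union.mp hp with hp | hp <;>
        · simp only [hAdef, hBdef, hIdef, Finset.mem_filter, Finset.mem_univ, true_and] at hp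
          exact hp.1
      have hcard : (A ∪ B c).card ≤ (Finset.univ.erase c).card := by
        apply Finset.card_le_card_of_injOn
          (fun p => if p.1 = v then ce p.2.1 p.2.2 else cv p.1)
        · intro p hp
          obtain ⟨hd, hmm⟩ := hmemI p hp
          rw [Finset.mem_coe, Finset.mem_erase]
          refine ⟨?_, Finset.mem_univ _⟩
          by_cases h : p.1 = v
          · simp only [h, if_pos]
            intro hceq
            exact H3 v p.2.1 p.2.2 hd (h ▸ hmm) (hc ▸ hceq.symm)
          · simp only [h, if_neg, if_false]
            intro hceq
            exact h (H1 p.1 v (fun hh => h hh) (hceq.trans hc.symm) |>.elim)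
        · intro p hp q hq heq
          simp only [Finset.mem_coe] at hp hq
          obtain ⟨hdp, hmp⟩ := hmemI p hp
          obtain ⟨hdq, hmq⟩ := hmemI q hq
          -- pair of p is s(c, partner p)
          have pairp : s(cv p.1, ce p.2.1 p.2.2)
              = s(c, if p.1 = v then ce p.2.1 p.2.2 else cv p.1) := by
            by_cases h : p.1 = v
            · simp [h, hc]
            · have hB : p ∈ B c := by
                rcases Finset.mem_union.mp hp with hp' | hp'
                · exact absurd ((Finset.mem_filter.mp hp').2) h
                · exact hp'
              have : ce p.2.1 p.2.2 = c := (Finset.mem_filter.mp hB).2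
              simp [h, this, Sym2.eq_swap]
          have pairq : s(cv q.1, ce q.2.1 q.2.2)
              = s(c, if q.1 = v then ce q.2.1 q.2.2 else cv q.1) := by
            by_cases h : q.1 = v
            · simp [h, hc]
            · have hB : q ∈ B c := by
                rcases Finset.mem_union.mp hq with hq' | hq'
                · exact absurd ((Finset.mem_filter.mp hq').2) h
                · exact hq'
              have : ce q.2.1 q.2.2 = c := (Finset.mem_filter.mp hB).2
              simp [h, this, Sym2.eq_swap]
          have heq' : (if p.1 = v then ce p.2.1 p.2.2 else cv p.1)
              = (if q.1 = v then ce q.2.1 q.2.2 else cv q.1) := heq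
          have hpair : s(cv p.1, ce p.2.1 p.2.2) = s(cv q.1, ce q.2.1 q.2.2) := by
            rw [pairp, pairq, heq']
          obtain ⟨h1, h2, h3⟩ := H4 p.1 p.2.1 p.2.2 q.1 q.2.1 q.2.2 hdp hdq hmp hmq hpair
          exact Prod.ext h1 (Prod.ext h2 h3)
      have hdisj : Disjoint A (B c) := by
        rw [Finset.disjoint_left]
        intro p hpA hpB
        obtain ⟨hd, hmm⟩ := hmemI p (Finset.mem_union_left _ hpA)
        have h1 : p.1 = v := (Finset.mem_filter.mp hpA).2
        have h2 : ce p.2.1 p.2.2 = c := (Finset.mem_filter.mp hpB).2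
        exact H3 p.1 p.2.1 p.2.2 hd hmm (by rw [h2, hc, h1])
      rw [Finset.card_union_of_disjoint hdisj, hAcard] at hcard
      rw [Finset.card_erase_of_mem (Finset.mem_univ c), Finset.card_univ, Fintype.card_fin] at hcard
      have hk1 : 1 ≤ k := Fin.pos c
      omega
    -- upper bound on each B c
    have hBn : ∀ c : Fin k, (B c).card ≤ n := by
      intro c
      have : (B c).card ≤ (Finset.univ : Finset (Fin n)).card := by
        apply Finset.card_le_card_of_injOn (fun p => p.1)
        · intro p _; exact Finset.mem_univ _
        · intro p hp q hq heq
          have heq' : p.1 = q.1 := heq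
          simp only [Finset.mem_coe, hBdef, Finset.mem_filter] at hp hq
          obtain ⟨hpI, hpc⟩ := hp
          obtain ⟨hqI, hqc⟩ := hq
          simp only [hIdef, Finset.mem_filter, Finset.mem_univ, true_and] at hpI hqI
          by_contra hure
          have hne2 : (p.2.1, p.2.2) ≠ (q.2.1, q.2.2) := by
            intro hh
            apply hure
            simp only [Prod.mk.injEq] at hh
            exact Prod.ext heq' (Prod.ext hh.1 hh.2)
          exact H2 p.2.1 q.2.1 p.2.2 q.2.2 hpI.1 hqI.1 hne2
            ⟨p.1, hpI.2, heq' ▸ hqI.2⟩ (hpc.trans hqc.symm)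
      simpa using this
    -- total incidence count
    have hIcard : I.card = n * (lam * (n - 1)) := by
      have h := Finset.card_eq_sum_card_fiberwise
        (f := fun p : Fin n × Sym2 (Fin n) × Fin lam => p.1) (s := I)
        (t := Finset.univ) (fun x _ => Finset.mem_univ _)
      rw [h]
      rw [Finset.sum_congr rfl (fun v _ => aux_fiber_card n lam v)]
      simp [Finset.card_univ, Nat.mul_comm]
    have hIsum : I.card = ∑ c : Fin k, (B c).card :=
      Finset.card_eq_sum_card_fiberwise
        (f := fun p => ce p.2.1 p.2.2) (s := I) (t := Finset.univ)
        (fun x _ => Finset.mem_univ _)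
    -- split over vertex colours
    set V : Finset (Fin k) := Finset.univ.image cv with hVdef
    have hVcard : V.card = n := by
      rw [hVdef, Finset.card_image_of_injective _ (fun a b hab => by
        by_contra hne'; exact H1 a b hne' hab), Finset.card_univ, Fintype.card_fin]
    have hsplit : ∑ c ∈ Finset.univ \ V, (B c).card + ∑ c ∈ V, (B c).card
        = ∑ c : Fin k, (B c).card := Finset.sum_sdiff (Finset.subset_univ V)
    -- sum over V
    have hsumV : n * (lam * (n - 1) + 1) + ∑ c ∈ V, (B c).card ≤ n * k := by
      have h1 : ∑ c ∈ V, (lam * (n - 1) + 1 + (B c).card) ≤ ∑ _c ∈ V, k := by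
        apply Finset.sum_le_sum
        intro c hcV
        obtain ⟨v, -, rfl⟩ := Finset.mem_image.mp hcV
        exact key v
      rw [Finset.sum_add_distrib, Finset.sum_const, Finset.sum_const, hVcard, smul_eq_mul,
        smul_eq_mul] at h1
      exact h1
    -- sum over complement
    have hsumW : ∑ c ∈ Finset.univ \ V, (B c).card ≤ (k - n) * n := by
      calc ∑ c ∈ Finset.univ \ V, (B c).card ≤ ∑ _c ∈ Finset.univ \ V, n :=
            Finset.sum_le_sum (fun c _ => hBn c)
        _ = (k - n) * n := by
            rw [Finset.sum_const, smul_eq_mul, Finset.card_sdiff_of_subset (Finset.subset_univ V),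
              Finset.card_univ, Fintype.card_fin, hVcard]
    -- n ≤ k
    have hv0 : (⟨0, by omega⟩ : Fin n) = ⟨0, by omega⟩ := rfl
    have hkey0 := key ⟨0, by omega⟩
    have hP : n - 1 ≤ lam * (n - 1) := Nat.le_mul_of_pos_left _ hlam
    have hnk : n ≤ k := by omega
    -- combine
    have hmain : n * (lam * (n - 1) + 1) + n * (lam * (n - 1)) ≤ n * k + (k - n) * n := by
      have := hIcard ▸ hIsum
      omega
    have hmain2 : n * (lam * (n - 1) + 1 + lam * (n - 1)) ≤ n * (k + (k - n)) := by
      calc n * (lam * (n - 1) + 1 + lam * (n - 1))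
          = n * (lam * (n - 1) + 1) + n * (lam * (n - 1)) := by ring
        _ ≤ n * k + (k - n) * n := hmain
        _ = n * (k + (k - n)) := by rw [Nat.mul_comm (k - n) n, ← Nat.mul_add]
    have hfin : lam * (n - 1) + 1 + lam * (n - 1) ≤ k + (k - n) :=
      Nat.le_of_mul_le_mul_left hmain2 (by omega)
    have hQ : (lam - 1) * (n - 1) + (n - 1) = lam * (n - 1) := by
      rw [← Nat.succ_mul]
      congr 1
      omega
    omega
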